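/- Suppose the 2×2 matrix inequality [[1-ρ², -η],[-η, η²]] + λ₁[[L², 0],[0, -1]] + λ₂[[-2m, 1],[1, 0]] ⪯ 0 is feasible for some λ₁, λ₂ ≥ 0. Then ρ² ≥ 1 - 2mη + L²η². (In particular, minimizing over η yields ρ² ≥ 1 - m²/L².) -/

import Mathlib

open Matrix

theorem stmt_12 (m L η ρ l₁ l₂ : ℝ) (hm : 0 < m) (hmL : m ≤ L) (hη : 0 < η)
    (hρ : 0 < ρ) (hl₁ : 0 ≤ l₁) (hl₂ : 0 ≤ l₂)
    (hlmi : (-(!![1 - ρ ^ 2, -η; -η, η ^ 2]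
      + l₁ • !![L ^ 2, 0; 0, -1]
      + l₂ • !![-2 * m, 1; 1, 0]) : Matrix (Fin 2) (Fin 2) ℝ).PosSemidef) :
    ρ ^ 2 ≥ 1 - 2 * m * η + L ^ 2 * η ^ 2 := by
  have h1 := hlmi.dotProduct_mulVec_nonneg ![1, m]
  have h2 := hlmi.dotProduct_mulVec_nonneg ![0, 1]
  simp [Matrix.mulVec, dotProduct, Fin.sum_univ_two, Matrix.smul_apply,
    Matrix.neg_apply, Matrix.add_apply] at h1 h2
  nlinarith [mul_nonneg (by nlinarith : (0:ℝ) ≤ l₁ - η ^ 2) (by nlinarith : (0:ℝ) ≤ L ^ 2 - m ^ 2)]
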